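/- arXiv:1807.04474 — 2 statements merged into one kernel-verified Lean document; each statement's English description precedes it below -/
import Mathlib

section
/- Let (x^k), (λ^{ν,k}), (μ^{ν,k}), (u^{ν,k}), (ρ_{ν,k}) be generated by the augmented Lagrangian method (Algorithm 3.1) applied to the partially penalized GNEP, under Assumption 3.2 with (ε_k) bounded and ε'_k → 0. Let K ⊆ ℕ and x̄ be such that x^{k+1} → x̄ along k ∈ K. Then for every player ν there exist multipliers μ̂^{ν,k+1} ∈ ℝ^{p_ν}, k ∈ K, such that ∇_{x^ν}‖g_+^ν(x^{k+1})‖² + ∇_{x^ν}h^ν(x^{k+1}) μ̂^{ν,k+1} → 0 and min{−h^ν(x^{k+1}), μ̂^{ν,k+1}} → 0 along k ∈ K; that is, the iterates satisfy an approximate KKT condition for the Feasibility GNEP. -/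
open Filter Topology Finset Function RealInnerProductSpace

/-- The strategy space of a GNEP: one Euclidean block per player. -/
abbrev Strat {N : ℕ} (n : Fin N → ℕ) := (ν : Fin N) → EuclideanSpace ℝ (Fin (n ν))

/-- Partial gradient of `f : Strat n → ℝ` with respect to player `ν`'s block at `x`. -/
noncomputable def pgrad {N : ℕ} {n : Fin N → ℕ} (ν : Fin N)
    (f : Strat n → ℝ) (x : Strat n) : EuclideanSpace ℝ (Fin (n ν)) :=
  gradient (fun z => f (Function.update x ν z)) (x ν)

/-- Positive linear dependence of a family on a finite index set. -/
def PosLinDep {ι E : Type*} [AddCommGroup E] [Module ℝ E]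
    (s : Finset ι) (v : ι → E) : Prop :=
  ∃ a : ι → ℝ, (∀ i, 0 ≤ a i) ∧ (∃ i ∈ s, a i ≠ 0) ∧ ∑ i ∈ s, a i • v i = 0

/-- Linear dependence of a family on a finite index set. -/
def LinDep {ι E : Type*} [AddCommGroup E] [Module ℝ E]
    (s : Finset ι) (v : ι → E) : Prop :=
  ∃ a : ι → ℝ, (∃ i ∈ s, a i ≠ 0) ∧ ∑ i ∈ s, a i • v i = 0

/-- CPLD with respect to player `ν`. -/
def CPLDnu {N : ℕ} {n : Fin N → ℕ} {ι : Type*} (ν : Fin N)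
    (c : ι → Strat n → ℝ) (x : Strat n) : Prop :=
  ∀ I : Finset ι, (∀ i ∈ I, c i x = 0) →
    PosLinDep I (fun i => pgrad ν (c i) x) →
    ∃ U ∈ 𝓝 x, ∀ y ∈ U, LinDep I (fun i => pgrad ν (c i) y)

/-- EMFCQ with respect to player `ν`. -/
def EMFCQnu {N : ℕ} {n : Fin N → ℕ} {ι : Type*} (ν : Fin N)
    (c : ι → Strat n → ℝ) (x : Strat n) : Prop :=
  ∃ d : EuclideanSpace ℝ (Fin (n ν)), ∀ i, 0 ≤ c i x → inner (𝕜 := ℝ) (pgrad ν (c i) x) d < 0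


lemma abs_le_sqrt_sum {ι : Type*} [Fintype ι] (v : ι → ℝ) (j : ι) :
    |v j| ≤ Real.sqrt (∑ i, v i ^ 2) := by
  rw [← Real.sqrt_sq_eq_abs]
  exact Real.sqrt_le_sqrt (Finset.single_le_sum (fun i _ => sq_nonneg (v i)) (Finset.mem_univ j))

lemma abs_min_smul {a b c : ℝ} (hc : 0 < c) (hc1 : c ≤ 1) : |min a (c * b)| ≤ |min a b| := by
  rcases le_total b 0 with hb | hb
  · have h1 : b ≤ c * b := by nlinarith
    have h2 : c * b ≤ 0 := mul_nonpos_of_nonneg_of_nonpos hc.le hb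
    have h3 : min a b ≤ min a (c * b) := min_le_min le_rfl h1
    have h4 : min a (c * b) ≤ 0 := (min_le_right _ _).trans h2
    rw [abs_of_nonpos h4, abs_of_nonpos (h3.trans h4)]
    linarith
  · have h1 : c * b ≤ b := by nlinarith
    have h2 : 0 ≤ c * b := mul_nonneg hc.le hb
    have hup : min a (c * b) ≤ min a b := min_le_min le_rfl h1
    rcases le_total a 0 with ha | ha
    · rw [min_eq_left (ha.trans h2), min_eq_left (ha.trans hb)]
    · have hlow : 0 ≤ min a (c * b) := le_min ha h2
      rw [abs_of_nonneg hlow]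
      exact hup.trans (le_abs_self _)

lemma hasDerivAt_maxsq (t : ℝ) : HasDerivAt (fun s : ℝ => max s 0 ^ 2) (2 * max t 0) t := by
  rcases lt_trichotomy t 0 with ht | ht | ht
  · have he : (fun s : ℝ => max s 0 ^ 2) =ᶠ[𝓝 t] fun _ => (0 : ℝ) := by
      filter_upwards [Iio_mem_nhds ht] with s hs
      simp [max_eq_right (le_of_lt (Set.mem_Iio.mp hs))]
    have := (hasDerivAt_const t (0 : ℝ)).congr_of_eventuallyEq he
    simpa [max_eq_right ht.le] using this
  · subst ht
    rw [hasDerivAt_iff_isLittleO]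
    simp only [max_self, mul_zero, smul_zero, sub_zero]
    rw [Asymptotics.isLittleO_iff]
    intro ε hε
    filter_upwards [Metric.ball_mem_nhds (0 : ℝ) hε] with s hs
    simp only [Metric.mem_ball, Real.dist_eq, sub_zero] at hs
    have h1 : max s 0 ^ 2 ≤ s ^ 2 := by
      rcases le_total s 0 with h | h
      · simp [max_eq_right h, sq_nonneg]
      · simp [max_eq_left h]
    have h2 : (0:ℝ) ≤ max s 0 ^ 2 := sq_nonneg _
    have h0 : ((0:ℝ)) ^ 2 = 0 := by norm_num
    rw [Real.norm_eq_abs, Real.norm_eq_abs, h0, sub_zero, abs_of_nonneg h2]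
    have hm : max s 0 ≤ |s| := max_le (le_abs_self s) (abs_nonneg s)
    have hm0 : (0:ℝ) ≤ max s 0 := le_max_right s 0
    nlinarith [mul_le_mul hm hm hm0 (abs_nonneg s),
      mul_le_mul_of_nonneg_right hs.le (abs_nonneg s)]
  · have he : (fun s : ℝ => max s 0 ^ 2) =ᶠ[𝓝 t] fun s => s ^ 2 := by
      filter_upwards [Ioi_mem_nhds ht] with s hs
      simp [max_eq_left (le_of_lt (Set.mem_Ioi.mp hs))]
    have := (by simpa using hasDerivAt_pow 2 t : HasDerivAt (fun s : ℝ => s ^ 2) (2 * t) t)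
    have := this.congr_of_eventuallyEq he
    simpa [max_eq_left ht.le] using this

noncomputable def Lnu {N : ℕ} {n : Fin N → ℕ} (ν : Fin N) :
    EuclideanSpace ℝ (Fin (n ν)) →L[ℝ] Strat n :=
  ContinuousLinearMap.pi
    (Pi.single (M := fun i => EuclideanSpace ℝ (Fin (n ν)) →L[ℝ] EuclideanSpace ℝ (Fin (n i)))
      ν (ContinuousLinearMap.id ℝ (EuclideanSpace ℝ (Fin (n ν)))))

lemma pgrad_eq {N : ℕ} {n : Fin N → ℕ} (ν : Fin N) (f : Strat n → ℝ)
    (hf : ContDiff ℝ 1 f) (y : Strat n) :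
    pgrad ν f y = (InnerProductSpace.toDual ℝ (EuclideanSpace ℝ (Fin (n ν)))).symm
      ((fderiv ℝ f y).comp (Lnu ν)) := by
  unfold pgrad gradient
  congr 1
  have h1 := hasFDerivAt_update (𝕜 := ℝ) y (y ν)
  have h2 := ((hf.differentiable one_ne_zero) (Function.update y ν (y ν))).hasFDerivAt
  have h3 := h2.comp (y ν) h1
  rw [Function.update_eq_self] at h3
  exact h3.fderiv

lemma pgrad_continuous {N : ℕ} {n : Fin N → ℕ} (ν : Fin N) (f : Strat n → ℝ)
    (hf : ContDiff ℝ 1 f) : Continuous (fun y : Strat n => pgrad ν f y) := by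
  have : (fun y : Strat n => pgrad ν f y) = fun y =>
      (InnerProductSpace.toDual ℝ (EuclideanSpace ℝ (Fin (n ν)))).symm
      ((fderiv ℝ f y).comp (Lnu ν)) :=
    funext (pgrad_eq ν f hf)
  rw [this]
  exact (LinearIsometryEquiv.continuous _).comp
    ((hf.continuous_fderiv one_ne_zero).clm_comp continuous_const)

lemma pgrad_sum_maxsq {N : ℕ} {n : Fin N → ℕ} {ι : Type*} [Fintype ι] (ν : Fin N)
    (g : ι → Strat n → ℝ) (hg : ∀ i, ContDiff ℝ 1 (g i)) (x : Strat n) :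
    pgrad ν (fun y => ∑ i, max (g i y) 0 ^ 2) x
      = ∑ i, (2 * max (g i x) 0) • pgrad ν (g i) x := by
  have hφ : ∀ i, HasFDerivAt (fun z => g i (Function.update x ν z))
      (fderiv ℝ (fun z => g i (Function.update x ν z)) (x ν)) (x ν) := by
    intro i
    apply DifferentiableAt.hasFDerivAt
    have h1 := (hasFDerivAt_update (𝕜 := ℝ) x (x ν)).differentiableAt
    have h2 := ((hg i).differentiable one_ne_zero).differentiableAt
      (x := Function.update x ν (x ν))
    exact h2.comp (x ν) h1
  have hq : ∀ i, HasFDerivAt (fun z => max (g i (Function.update x ν z)) 0 ^ 2)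
      ((2 * max (g i x) 0) • fderiv ℝ (fun z => g i (Function.update x ν z)) (x ν)) (x ν) := by
    intro i
    have := (hasDerivAt_maxsq (g i (Function.update x ν (x ν)))).comp_hasFDerivAt (x ν) (hφ i)
    simpa [Function.comp_def, Function.update_eq_self] using this
  have hsum := HasFDerivAt.fun_sum (fun i (_ : i ∈ Finset.univ) => hq i)
  unfold pgrad gradient
  rw [hsum.fderiv, map_sum]
  refine Finset.sum_congr rfl fun i _ => ?_
  rw [map_smulₛₗ]
  simp [starRingEnd_apply]

/-- **Lemma 4.1.** Along any convergent subsequence of the iterates of the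
augmented Lagrangian method, there exist multipliers satisfying an approximate KKT condition
of the Feasibility GNEP. -/
theorem stmt9 {N : ℕ} {n m p : Fin N → ℕ}
    (θ : Fin N → Strat n → ℝ)
    (g : (ν : Fin N) → Fin (m ν) → Strat n → ℝ)
    (h : (ν : Fin N) → Fin (p ν) → Strat n → ℝ)
    (hθ : ∀ ν, ContDiff ℝ 1 (θ ν))
    (hg : ∀ ν i, ContDiff ℝ 1 (g ν i))
    (hh : ∀ ν j, ContDiff ℝ 1 (h ν j))
    (x : ℕ → Strat n)
    (lam : (k : ℕ) → (ν : Fin N) → Fin (m ν) → ℝ)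
    (mu : (k : ℕ) → (ν : Fin N) → Fin (p ν) → ℝ)
    (u : (k : ℕ) → (ν : Fin N) → Fin (m ν) → ℝ)
    (rho : ℕ → Fin N → ℝ)
    (umax : ℝ) (τ γ : Fin N → ℝ)
    (humax : 0 ≤ umax)
    (hτ : ∀ ν, τ ν ∈ Set.Ioo (0:ℝ) 1)
    (hγ : ∀ ν, 1 < γ ν)
    (hrho0 : ∀ ν, 0 < rho 0 ν)
    (hu0 : ∀ ν i, u 0 ν i ∈ Set.Icc 0 umax)
    (hlam : ∀ k ν i, lam (k+1) ν i = max (u k ν i + rho k ν * g ν i (x (k+1))) 0)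
    (hu : ∀ k ν i, u (k+1) ν i = min (lam (k+1) ν i) umax)
    (hrho : ∀ k ν,
      (Real.sqrt (∑ i, (min (-(g ν i (x (k+1)))) (lam (k+1) ν i)) ^ 2) ≤
          τ ν * Real.sqrt (∑ i, (min (-(g ν i (x k))) (lam k ν i)) ^ 2) →
        rho (k+1) ν = rho k ν) ∧
      (¬ (Real.sqrt (∑ i, (min (-(g ν i (x (k+1)))) (lam (k+1) ν i)) ^ 2) ≤
          τ ν * Real.sqrt (∑ i, (min (-(g ν i (x k))) (lam k ν i)) ^ 2)) →
        rho (k+1) ν = γ ν * rho k ν))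
    (eps eps' : ℕ → ℝ)
    (heps0 : ∀ k, 0 ≤ eps k)
    (heps'0 : ∀ k, 0 ≤ eps' k)
    (heps' : Tendsto eps' atTop (𝓝 0))
    (hA1 : ∀ k ν, ‖pgrad ν (θ ν) (x (k+1))
        + ∑ i, max (u k ν i + rho k ν * g ν i (x (k+1))) 0 • pgrad ν (g ν i) (x (k+1))
        + ∑ j, mu (k+1) ν j • pgrad ν (h ν j) (x (k+1))‖ ≤ eps k)
    (hA2 : ∀ k ν, Real.sqrt (∑ j, (min (-(h ν j (x (k+1)))) (mu (k+1) ν j)) ^ 2) ≤ eps' k)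
    (hepsbd : ∃ M, ∀ k, eps k ≤ M)
    (φ : ℕ → ℕ) (hφ : StrictMono φ) (xbar : Strat n)
    (hxconv : Tendsto (fun k => x (φ k + 1)) atTop (𝓝 xbar)) :
    ∀ ν, ∃ muhat : ℕ → Fin (p ν) → ℝ,
      Tendsto (fun k => pgrad ν (fun y => ∑ i, max (g ν i y) 0 ^ 2) (x (φ k + 1))
          + ∑ j, muhat k j • pgrad ν (h ν j) (x (φ k + 1))) atTop (𝓝 0) ∧
      ∀ j, Tendsto (fun k => min (-(h ν j (x (φ k + 1)))) (muhat k j)) atTop (𝓝 0) := by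
  
  intro ν
  have hgcont : ∀ i, Tendsto (fun k => g ν i (x (φ k + 1))) atTop (𝓝 (g ν i xbar)) :=
    fun i => ((hg ν i).continuous.tendsto xbar).comp hxconv
  have hhcont : ∀ j, Tendsto (fun k => h ν j (x (φ k + 1))) atTop (𝓝 (h ν j xbar)) :=
    fun j => ((hh ν j).continuous.tendsto xbar).comp hxconv
  have hpg : ∀ i, Tendsto (fun k => pgrad ν (g ν i) (x (φ k + 1))) atTop
      (𝓝 (pgrad ν (g ν i) xbar)) :=
    fun i => ((pgrad_continuous ν _ (hg ν i)).tendsto xbar).comp hxconv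
  have hpθ : Tendsto (fun k => pgrad ν (θ ν) (x (φ k + 1))) atTop (𝓝 (pgrad ν (θ ν) xbar)) :=
    ((pgrad_continuous ν _ (hθ ν)).tendsto xbar).comp hxconv
  have hph : ∀ j, Tendsto (fun k => pgrad ν (h ν j) (x (φ k + 1))) atTop
      (𝓝 (pgrad ν (h ν j) xbar)) :=
    fun j => ((pgrad_continuous ν _ (hh ν j)).tendsto xbar).comp hxconv
  have hmu_min : ∀ j, Tendsto (fun k => min (-(h ν j (x (φ k + 1)))) (mu (φ k + 1) ν j))
      atTop (𝓝 0) := by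
    intro j
    have hb : ∀ k, ‖min (-(h ν j (x (k + 1)))) (mu (k + 1) ν j)‖ ≤ eps' k := fun k =>
      (abs_le_sqrt_sum (fun j' => min (-(h ν j' (x (k + 1)))) (mu (k + 1) ν j')) j).trans
        (hA2 k ν)
    exact (squeeze_zero_norm hb heps').comp hφ.tendsto_atTop
  have hhbar : ∀ j, h ν j xbar ≤ 0 := by
    intro j
    have h1 : Tendsto (fun k => -(h ν j (x (φ k + 1)))) atTop (𝓝 (-(h ν j xbar))) :=
      (hhcont j).neg
    have := le_of_tendsto_of_tendsto' (hmu_min j) h1 (fun k => min_le_left _ _)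
    linarith
  by_cases hcase : ∃ K0, ∀ k ≥ K0,
      Real.sqrt (∑ i, (min (-(g ν i (x (k+1)))) (lam (k+1) ν i)) ^ 2) ≤
        τ ν * Real.sqrt (∑ i, (min (-(g ν i (x k))) (lam k ν i)) ^ 2)
  · -- penalty parameter bounded case: feasibility
    obtain ⟨K0, hK0⟩ := hcase
    set V : ℕ → ℝ := fun k => Real.sqrt (∑ i, (min (-(g ν i (x k))) (lam k ν i)) ^ 2) with hVdef
    have hV0 : ∀ k, 0 ≤ V k := fun k => Real.sqrt_nonneg _
    have hτ0 : 0 < τ ν := (hτ ν).1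
    have hτ1 : τ ν < 1 := (hτ ν).2
    have hgeo : ∀ mm : ℕ, V (K0 + mm) ≤ τ ν ^ mm * V K0 := by
      intro mm
      induction mm with
      | zero => simp
      | succ mm ih =>
        have h5 : V (K0 + mm + 1) ≤ τ ν * V (K0 + mm) := hK0 (K0 + mm) (Nat.le_add_right _ _)
        have h6 : τ ν * V (K0 + mm) ≤ τ ν * (τ ν ^ mm * V K0) :=
          mul_le_mul_of_nonneg_left ih hτ0.le
        calc V (K0 + (mm + 1)) = V (K0 + mm + 1) := by rw [Nat.add_succ]
          _ ≤ τ ν * (τ ν ^ mm * V K0) := h5.trans h6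
          _ = τ ν ^ (mm + 1) * V K0 := by ring
    have hVtend : Tendsto V atTop (𝓝 0) := by
      have h2 : Tendsto (fun mm => τ ν ^ mm * V K0) atTop (𝓝 0) := by
        simpa using (tendsto_pow_atTop_nhds_zero_of_lt_one hτ0.le hτ1).mul_const (V K0)
      have h3 : Tendsto (fun mm => V (K0 + mm)) atTop (𝓝 0) :=
        squeeze_zero (fun mm => hV0 _) hgeo h2
      exact (tendsto_add_atTop_iff_nat K0).mp (by simpa [Nat.add_comm] using h3)
    have hmin_g : ∀ i, Tendsto (fun k => min (-(g ν i (x (φ k + 1)))) (lam (φ k + 1) ν i))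
        atTop (𝓝 0) := by
      intro i
      have hb : ∀ k, ‖min (-(g ν i (x (k + 1)))) (lam (k + 1) ν i)‖ ≤ V (k + 1) := fun k =>
        abs_le_sqrt_sum (fun i' => min (-(g ν i' (x (k + 1)))) (lam (k + 1) ν i')) i
      have h4 : Tendsto (fun k => V (k + 1)) atTop (𝓝 0) :=
        hVtend.comp (tendsto_add_atTop_nat 1)
      exact (squeeze_zero_norm hb h4).comp hφ.tendsto_atTop
    have hgbar : ∀ i, max (g ν i xbar) 0 = 0 := by
      intro i
      have h1 : Tendsto (fun k => -(g ν i (x (φ k + 1)))) atTop (𝓝 (-(g ν i xbar))) :=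
        (hgcont i).neg
      have := le_of_tendsto_of_tendsto' (hmin_g i) h1 (fun k => min_le_left _ _)
      exact max_eq_right (by linarith)
    refine ⟨fun _ _ => 0, ?_, ?_⟩
    · have hterm : ∀ i, Tendsto (fun k =>
          (2 * max (g ν i (x (φ k + 1))) 0) • pgrad ν (g ν i) (x (φ k + 1))) atTop (𝓝 0) := by
        intro i
        have hc : Tendsto (fun k => 2 * max (g ν i (x (φ k + 1))) 0) atTop (𝓝 0) := by
          have h9 : Tendsto (fun k => max (g ν i (x (φ k + 1))) 0) atTop
              (𝓝 (max (g ν i xbar) 0)) := (hgcont i).max (tendsto_const_nhds (x := (0:ℝ)))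
          have := h9.const_mul (2:ℝ)
          simpa [hgbar i] using this
        simpa using hc.smul (hpg i)
      have hsum : Tendsto (fun k => ∑ i, (2 * max (g ν i (x (φ k + 1))) 0) •
          pgrad ν (g ν i) (x (φ k + 1))) atTop (𝓝 0) := by
        simpa using tendsto_finset_sum Finset.univ (fun i _ => hterm i)
      refine hsum.congr fun k => ?_
      rw [pgrad_sum_maxsq ν _ (hg ν)]
      simp
    · intro j
      have h1 : Tendsto (fun k => min (-(h ν j (x (φ k + 1)))) (0:ℝ)) atTop
          (𝓝 (min (-(h ν j xbar)) 0)) := ((hhcont j).neg).min tendsto_const_nhds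
      have e : min (-(h ν j xbar)) 0 = 0 := min_eq_right (by linarith [hhbar j])
      simpa only [e] using h1
  · -- penalty parameter unbounded case
    push_neg at hcase
    have hρpos : ∀ k, 0 < rho k ν := by
      intro k
      induction k with
      | zero => exact hrho0 ν
      | succ k ih =>
        by_cases ht : Real.sqrt (∑ i, (min (-(g ν i (x (k+1)))) (lam (k+1) ν i)) ^ 2) ≤
            τ ν * Real.sqrt (∑ i, (min (-(g ν i (x k))) (lam k ν i)) ^ 2)
        · rw [(hrho k ν).1 ht]; exact ih
        · rw [(hrho k ν).2 ht]; exact mul_pos (lt_trans one_pos (hγ ν)) ih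
    have hmono : Monotone (fun k => rho k ν) := by
      apply monotone_nat_of_le_succ
      intro k
      by_cases ht : Real.sqrt (∑ i, (min (-(g ν i (x (k+1)))) (lam (k+1) ν i)) ^ 2) ≤
          τ ν * Real.sqrt (∑ i, (min (-(g ν i (x k))) (lam k ν i)) ^ 2)
      · rw [(hrho k ν).1 ht]
      · rw [(hrho k ν).2 ht]
        nlinarith [hρpos k, hγ ν]
    have hjump : ∀ jj : ℕ, ∃ k, rho 0 ν * γ ν ^ jj ≤ rho k ν := by
      intro jj
      induction jj with
      | zero => exact ⟨0, by simp⟩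
      | succ jj ih =>
        obtain ⟨k, hk⟩ := ih
        obtain ⟨k', hk', hnt⟩ := hcase k
        refine ⟨k' + 1, ?_⟩
        rw [(hrho k' ν).2 (not_le.mpr hnt)]
        have h5 : rho k ν ≤ rho k' ν := hmono hk'
        have h6 : 0 < γ ν := lt_trans one_pos (hγ ν)
        calc rho 0 ν * γ ν ^ (jj + 1) = γ ν * (rho 0 ν * γ ν ^ jj) := by ring
          _ ≤ γ ν * rho k' ν := mul_le_mul_of_nonneg_left (hk.trans h5) h6.le
    have hρtop : Tendsto (fun k => rho k ν) atTop atTop := by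
      apply tendsto_atTop_atTop_of_monotone hmono
      intro b
      obtain ⟨jj, hjj⟩ :=
        ((tendsto_pow_atTop_atTop_of_one_lt (hγ ν)).eventually_ge_atTop (b / rho 0 ν)).exists
      obtain ⟨k, hk⟩ := hjump jj
      refine ⟨k, le_trans ?_ hk⟩
      rw [mul_comm]
      exact (div_le_iff₀ (hrho0 ν)).mp hjj
    have hρφ : Tendsto (fun k => rho (φ k) ν) atTop atTop := hρtop.comp hφ.tendsto_atTop
    have hinv : Tendsto (fun k => 2 / rho (φ k) ν) atTop (𝓝 0) :=
      Tendsto.div_atTop tendsto_const_nhds hρφ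
    have hubd : ∀ k i, 0 ≤ u k ν i ∧ u k ν i ≤ umax := by
      intro k
      induction k with
      | zero => exact fun i => ⟨(hu0 ν i).1, (hu0 ν i).2⟩
      | succ k _ =>
        intro i
        rw [hu k ν i, hlam k ν i]
        exact ⟨le_min (le_max_right _ _) humax, min_le_right _ _⟩
    refine ⟨fun k j => (2 / rho (φ k) ν) * mu (φ k + 1) ν j, ?_, ?_⟩
    · obtain ⟨M, hM⟩ := hepsbd
      set W : ℕ → EuclideanSpace ℝ (Fin (n ν)) := fun k =>
        pgrad ν (θ ν) (x (φ k + 1))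
          + ∑ i, max (u (φ k) ν i + rho (φ k) ν * g ν i (x (φ k + 1))) 0 •
              pgrad ν (g ν i) (x (φ k + 1))
          + ∑ j, mu (φ k + 1) ν j • pgrad ν (h ν j) (x (φ k + 1)) with hWdef
      have hWb : ∀ k, ‖W k‖ ≤ M := fun k => (hA1 (φ k) ν).trans (hM _)
      have hA : Tendsto (fun k => (2 / rho (φ k) ν) • W k) atTop (𝓝 0) := by
        apply squeeze_zero_norm (a := fun k => (2 / rho (φ k) ν) * M)
        · intro k
          have h8 : (0:ℝ) ≤ 2 / rho (φ k) ν := (div_pos two_pos (hρpos (φ k))).le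
          rw [norm_smul, Real.norm_eq_abs, abs_of_nonneg h8]
          exact mul_le_mul_of_nonneg_left (hWb k) h8
        · simpa using hinv.mul_const M
      have hB : Tendsto (fun k => (-(2 / rho (φ k) ν)) • pgrad ν (θ ν) (x (φ k + 1)))
          atTop (𝓝 0) := by
        simpa using hinv.neg.smul hpθ
      have hC : Tendsto (fun k => ∑ i,
          (2 * max (g ν i (x (φ k + 1))) 0
            - (2 / rho (φ k) ν) * max (u (φ k) ν i + rho (φ k) ν * g ν i (x (φ k + 1))) 0) •
          pgrad ν (g ν i) (x (φ k + 1))) atTop (𝓝 0) := by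
        have hterm : ∀ i, Tendsto (fun k =>
            (2 * max (g ν i (x (φ k + 1))) 0
              - (2 / rho (φ k) ν) * max (u (φ k) ν i + rho (φ k) ν * g ν i (x (φ k + 1))) 0) •
            pgrad ν (g ν i) (x (φ k + 1))) atTop (𝓝 0) := by
          intro i
          have hc : Tendsto (fun k =>
              2 * max (g ν i (x (φ k + 1))) 0
                - (2 / rho (φ k) ν) * max (u (φ k) ν i + rho (φ k) ν * g ν i (x (φ k + 1))) 0)
              atTop (𝓝 0) := by
            apply squeeze_zero_norm (a := fun k => 2 * umax / rho (φ k) ν)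
            · intro k
              have hρk := hρpos (φ k)
              have hui := hubd (φ k) i
              set a := g ν i (x (φ k + 1))
              set ρ := rho (φ k) ν
              set uu := u (φ k) ν i
              have e1 : (2 / ρ) * max (uu + ρ * a) 0 = max (2 * a + 2 * uu / ρ) 0 := by
                rw [mul_max_of_nonneg _ _ (div_pos two_pos hρk).le]
                rw [mul_zero]
                congr 1
                field_simp
                ring
              have e2 : 2 * max a 0 = max (2 * a) 0 := by
                rw [mul_max_of_nonneg _ _ (by norm_num : (0:ℝ) ≤ 2), mul_zero]
              rw [Real.norm_eq_abs, e1, e2]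
              calc |max (2 * a) 0 - max (2 * a + 2 * uu / ρ) 0|
                  ≤ |2 * a - (2 * a + 2 * uu / ρ)| := abs_max_sub_max_le_abs _ _ _
                _ = |2 * uu / ρ| := by rw [show 2*a - (2*a + 2*uu/ρ) = -(2*uu/ρ) by ring, abs_neg]
                _ = 2 * uu / ρ := abs_of_nonneg (div_nonneg (by linarith [hui.1]) hρk.le)
                _ ≤ 2 * umax / ρ := by
                    rw [div_le_div_iff₀ hρk hρk]
                    nlinarith [hui.2, hρk]
            · exact Tendsto.div_atTop tendsto_const_nhds hρφ
          simpa using hc.smul (hpg i)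
        simpa using tendsto_finset_sum Finset.univ (fun i _ => hterm i)
      have hid : ∀ k, (2 / rho (φ k) ν) • W k
            + (-(2 / rho (φ k) ν)) • pgrad ν (θ ν) (x (φ k + 1))
            + ∑ i, (2 * max (g ν i (x (φ k + 1))) 0
                - (2 / rho (φ k) ν) * max (u (φ k) ν i + rho (φ k) ν * g ν i (x (φ k + 1))) 0) •
                pgrad ν (g ν i) (x (φ k + 1))
          = pgrad ν (fun y => ∑ i, max (g ν i y) 0 ^ 2) (x (φ k + 1))
            + ∑ j, ((2 / rho (φ k) ν) * mu (φ k + 1) ν j) • pgrad ν (h ν j) (x (φ k + 1)) := by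
        intro k
        rw [pgrad_sum_maxsq ν _ (hg ν)]
        rw [hWdef]
        simp only [smul_add, Finset.smul_sum, smul_smul, sub_smul, Finset.sum_sub_distrib,
          neg_smul]
        abel
      have htot := (hA.add hB).add hC
      simpa using htot.congr hid
    · intro j
      apply squeeze_zero_norm' (a := fun k => eps' (φ k))
      · have hev : ∀ᶠ k in atTop, (2:ℝ) ≤ rho (φ k) ν := hρφ.eventually_ge_atTop 2
        filter_upwards [hev] with k hk
        have hρk := hρpos (φ k)
        have hc1 : 0 < 2 / rho (φ k) ν := by positivity
        have hc2 : 2 / rho (φ k) ν ≤ 1 := by rw [div_le_one hρk]; linarith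
        calc ‖min (-(h ν j (x (φ k + 1)))) ((2 / rho (φ k) ν) * mu (φ k + 1) ν j)‖
            ≤ |min (-(h ν j (x (φ k + 1)))) (mu (φ k + 1) ν j)| := abs_min_smul hc1 hc2
          _ ≤ Real.sqrt (∑ j', (min (-(h ν j' (x (φ k + 1)))) (mu (φ k + 1) ν j')) ^ 2) :=
              abs_le_sqrt_sum (fun j' => min (-(h ν j' (x (φ k + 1)))) (mu (φ k + 1) ν j')) j
          _ ≤ eps' (φ k) := hA2 (φ k) ν
      · exact heps'.comp hφ.tendsto_atTop
end

section
/- Consider a GNEP in which player ν solves min_{x^ν} θ_ν(x) s.t. g(x) ≤ 0 and h^ν(x^ν) ≤ 0, where all players share a constraint map g : ℝ^n → ℝ^m with convex continuously differentiable components and each h^ν : ℝ^{n_ν} → ℝ^{p_ν} has convex continuously differentiable components. Assume this GNEP has feasible points. If x̄ is a KKT point of the corresponding Feasibility GNEP, then g(x̄) ≤ 0, i.e. x̄ is feasible for the GNEP. -/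
open Filter Topology Finset Function RealInnerProductSpace

lemma maxsq_mono : Monotone (fun s : ℝ => max s 0 ^ 2) := fun a b hab =>
  pow_le_pow_left₀ (le_max_right a 0) (max_le_max hab le_rfl) 2

lemma maxsq_convex : ConvexOn ℝ Set.univ (fun s : ℝ => max s 0 ^ 2) := by
  refine Monotone.convexOn_univ_of_deriv (fun t => (hasDerivAt_maxsq t).differentiableAt) ?_
  have hd : deriv (fun s : ℝ => max s 0 ^ 2) = fun t => 2 * max t 0 := by
    funext t; exact (hasDerivAt_maxsq t).deriv
  rw [hd]
  intro a b hab
  dsimp only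
  have : max a 0 ≤ max b 0 := max_le_max hab le_rfl
  linarith

lemma grad_ineq {E : Type*} [NormedAddCommGroup E] [NormedSpace ℝ E] {f : E → ℝ}
    {D : E →L[ℝ] ℝ} {x : E} (hconv : ConvexOn ℝ Set.univ f) (hD : HasFDerivAt f D x)
    (y : E) : f x + D (y - x) ≤ f y := by
  have hline : HasDerivAt (fun t : ℝ => x + t • (y - x)) (y - x) 0 := by
    simpa using ((hasDerivAt_id (0:ℝ)).smul_const (y - x)).const_add x
  have hD' : HasFDerivAt f D ((fun t : ℝ => x + t • (y - x)) 0) := by simpa using hD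
  have hφ : HasDerivAt (fun t : ℝ => f (x + t • (y - x))) (D (y - x)) 0 :=
    hD'.comp_hasDerivAt 0 hline
  have hconvφ : ConvexOn ℝ Set.univ (fun t : ℝ => f (x + t • (y - x))) := by
    refine ⟨convex_univ, fun a _ b _ wa wb hwa hwb hab => ?_⟩
    have hident : x + (wa • a + wb • b) • (y - x)
        = wa • (x + a • (y - x)) + wb • (x + b • (y - x)) := by
      have hwb' : wb = 1 - wa := by linarith
      subst hwb'
      simp only [smul_eq_mul]
      module
    dsimp only
    rw [hident]
    exact hconv.2 (Set.mem_univ _) (Set.mem_univ _) hwa hwb hab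
  have hsl := hconvφ.le_slope_of_hasDerivWithinAt (Set.mem_univ (0:ℝ)) (Set.mem_univ 1)
    one_pos hφ.hasDerivWithinAt
  rw [slope_def_field] at hsl
  simp only [one_smul, zero_smul, add_zero, sub_zero, div_one, add_sub_cancel] at hsl
  linarith

lemma pgrad_inner {N : ℕ} {n : Fin N → ℕ} {f : Strat n → ℝ} {D : Strat n →L[ℝ] ℝ} {x : Strat n}
    (hD : HasFDerivAt f D x) (ν : Fin N) (v : EuclideanSpace ℝ (Fin (n ν))) :
    inner (𝕜 := ℝ) (pgrad ν f x) v = D (Pi.single ν v) := by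
  have h1 := hasFDerivAt_update (𝕜 := ℝ) x (x ν)
  have h2 : Function.update x ν (x ν) = x := Function.update_eq_self ν x
  have hD2 : HasFDerivAt f D (Function.update x ν (x ν)) := by rw [h2]; exact hD
  have hupd : HasFDerivAt (fun z => f (Function.update x ν z))
      (D.comp (ContinuousLinearMap.pi (Pi.single ν (ContinuousLinearMap.id ℝ _)))) (x ν) :=
    hD2.comp (x ν) h1
  have hg := hasFDerivAt_iff_hasGradientAt.mp hupd
  have harg : (ContinuousLinearMap.pi (Pi.single ν (ContinuousLinearMap.id ℝ
      (EuclideanSpace ℝ (Fin (n ν)))))) v = (Pi.single ν v : Strat n) := by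
    funext μ
    rcases eq_or_ne μ ν with rfl | hμν
    · simp
    · simp [Pi.single_eq_of_ne hμν]
  rw [pgrad, hg.gradient, InnerProductSpace.toDual_symm_apply,
    ContinuousLinearMap.comp_apply, harg]

lemma convexOn_finset_sum {E ι : Type*} [AddCommGroup E] [Module ℝ E] (t : Finset ι)
    {f : ι → E → ℝ} (h : ∀ i ∈ t, ConvexOn ℝ Set.univ (f i)) :
    ConvexOn ℝ Set.univ (fun x => ∑ i ∈ t, f i x) := by
  induction t using Finset.cons_induction with
  | empty => simpa using convexOn_const (0:ℝ) convex_univ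
  | cons i t hit ih =>
    simp only [Finset.sum_cons]
    exact (h i (Finset.mem_cons_self i t)).add (ih fun j hj => h j (Finset.mem_cons.2 (Or.inr hj)))


/-- **Theorem 4.4.** For a jointly-convex GNEP with shared convex penalized
constraints `g` and individual convex constraints `h ν` in the own variables only, every KKT
point of the Feasibility GNEP is feasible, provided feasible points exist. -/
theorem stmt12 {N : ℕ} {n : Fin N → ℕ} {m : ℕ} {p : Fin N → ℕ}
    (g : Fin m → Strat n → ℝ)
    (h : (ν : Fin N) → Fin (p ν) → EuclideanSpace ℝ (Fin (n ν)) → ℝ)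
    (hgC1 : ∀ i, ContDiff ℝ 1 (g i))
    (hgconv : ∀ i, ConvexOn ℝ Set.univ (g i))
    (hhC1 : ∀ ν j, ContDiff ℝ 1 (h ν j))
    (hhconv : ∀ ν j, ConvexOn ℝ Set.univ (h ν j))
    (hfeasible : ∃ z : Strat n, (∀ i, g i z ≤ 0) ∧ ∀ ν j, h ν j (z ν) ≤ 0)
    (xbar : Strat n)
    (hKKT : ∀ ν, ∃ w : Fin (p ν) → ℝ,
      (pgrad ν (fun y => ∑ i, max (g i y) 0 ^ 2) xbar
        + ∑ j, w j • gradient (h ν j) (xbar ν) = 0) ∧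
      (∀ j, min (-(h ν j (xbar ν))) (w j) = 0)) :
    ∀ i, g i xbar ≤ 0 := by
  obtain ⟨z, hz1, hz2⟩ := hfeasible
  set θ : Strat n → ℝ := fun y => ∑ i, max (g i y) 0 ^ 2 with hθdef
  -- differentiability of θ
  have hθdiff : HasFDerivAt θ (∑ i, (2 * max (g i xbar) 0) • fderiv ℝ (g i) xbar) xbar := by
    apply HasFDerivAt.fun_sum
    intro i _
    exact (hasDerivAt_maxsq (g i xbar)).comp_hasFDerivAt xbar
      (((hgC1 i).differentiable one_ne_zero) xbar).hasFDerivAt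
  -- convexity of θ
  have hθconv : ConvexOn ℝ Set.univ θ := by
    apply convexOn_finset_sum
    intro i _
    refine ⟨convex_univ, fun a _ b _ wa wb hwa hwb hab => ?_⟩
    dsimp only
    calc max (g i (wa • a + wb • b)) 0 ^ 2
        ≤ max (wa * g i a + wb * g i b) 0 ^ 2 := by
          apply maxsq_mono
          simpa using (hgconv i).2 (Set.mem_univ a) (Set.mem_univ b) hwa hwb hab
      _ ≤ wa * max (g i a) 0 ^ 2 + wb * max (g i b) 0 ^ 2 := by
          simpa [smul_eq_mul] using
            maxsq_convex.2 (Set.mem_univ (g i a)) (Set.mem_univ (g i b)) hwa hwb hab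
      _ = wa • max (g i a) 0 ^ 2 + wb • max (g i b) 0 ^ 2 := by simp [smul_eq_mul]
  set D := ∑ i, (2 * max (g i xbar) 0) • fderiv ℝ (g i) xbar with hDdef
  -- the per-player nonnegativity
  have key : ∀ ν, (0:ℝ) ≤ inner (𝕜 := ℝ) (pgrad ν θ xbar) (z ν - xbar ν) := by
    intro ν
    obtain ⟨w, hw1, hw2⟩ := hKKT ν
    have hwpos : ∀ j, 0 ≤ w j := fun j => (hw2 j) ▸ min_le_right _ _
    have hhle : ∀ j, h ν j (xbar ν) ≤ 0 := fun j => by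
      have := (hw2 j) ▸ min_le_left (-(h ν j (xbar ν))) (w j); linarith
    have hcomp : ∀ j, w j * h ν j (xbar ν) = 0 := by
      intro j
      rcases min_choice (-(h ν j (xbar ν))) (w j) with h' | h' <;> rw [hw2 j] at h'
      · rw [show h ν j (xbar ν) = 0 by linarith, mul_zero]
      · rw [← h']; ring
    have hpg : pgrad ν θ xbar = -∑ j, w j • gradient (h ν j) (xbar ν) :=
      eq_neg_of_add_eq_zero_left hw1
    rw [hpg, inner_neg_left, sum_inner]
    have hterm : ∀ j, (0:ℝ) ≤ -(inner (𝕜 := ℝ) (w j • gradient (h ν j) (xbar ν)) (z ν - xbar ν)) := by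
      intro j
      rw [real_inner_smul_left]
      have hdiff := (((hhC1 ν j).differentiable one_ne_zero) (xbar ν)).hasGradientAt
      have hfd : HasFDerivAt (h ν j)
          (InnerProductSpace.toDual ℝ _ (gradient (h ν j) (xbar ν))) (xbar ν) :=
        hasGradientAt_iff_hasFDerivAt.mp hdiff
      have hgi := grad_ineq (hhconv ν j) hfd (z ν)
      rw [InnerProductSpace.toDual_apply_apply] at hgi
      have h1 : inner (𝕜 := ℝ) (gradient (h ν j) (xbar ν)) (z ν - xbar ν)
          ≤ h ν j (z ν) - h ν j (xbar ν) := by linarith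
      have h2 : w j * inner (𝕜 := ℝ) (gradient (h ν j) (xbar ν)) (z ν - xbar ν)
          ≤ w j * (h ν j (z ν) - h ν j (xbar ν)) := mul_le_mul_of_nonneg_left h1 (hwpos j)
      have h3 : w j * (h ν j (z ν) - h ν j (xbar ν)) = w j * h ν j (z ν) := by
        rw [mul_sub, hcomp j]; ring
      have h4 : w j * h ν j (z ν) ≤ 0 := mul_nonpos_of_nonneg_of_nonpos (hwpos j) (hz2 ν j)
      linarith
    have := Finset.sum_nonpos (fun j (_ : j ∈ Finset.univ) => by linarith [hterm j] :
      ∀ j ∈ Finset.univ, inner (𝕜 := ℝ) (w j • gradient (h ν j) (xbar ν)) (z ν - xbar ν) ≤ 0)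
    linarith
  -- fderiv decomposition
  have hDdec : D (z - xbar) = ∑ ν, inner (𝕜 := ℝ) (pgrad ν θ xbar) (z ν - xbar ν) := by
    have hd : (z - xbar) = ∑ ν, Pi.single ν ((z - xbar) ν) := (Finset.univ_sum_single _).symm
    rw [hd, map_sum]
    refine Finset.sum_congr rfl fun ν _ => ?_
    rw [← pgrad_inner hθdiff ν ((z - xbar) ν)]
    rfl
  have hineq := grad_ineq hθconv hθdiff z
  rw [hDdec] at hineq
  have hθz : θ z = 0 := by
    apply Finset.sum_eq_zero
    intro i _
    rw [max_eq_right (hz1 i)]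
    norm_num
  have hsum_nonneg : (0:ℝ) ≤ ∑ ν, inner (𝕜 := ℝ) (pgrad ν θ xbar) (z ν - xbar ν) :=
    Finset.sum_nonneg fun ν _ => key ν
  have hθxbar : θ xbar ≤ 0 := by linarith
  intro i
  have hterm_le : max (g i xbar) 0 ^ 2 ≤ θ xbar := by
    rw [hθdef]
    exact Finset.single_le_sum (f := fun i => max (g i xbar) 0 ^ 2)
      (fun j _ => sq_nonneg _) (Finset.mem_univ i)
  have : max (g i xbar) 0 ^ 2 = 0 := le_antisymm (by linarith) (sq_nonneg _)
  have hmax : max (g i xbar) 0 = 0 := by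
    have := sq_eq_zero_iff.mp this
    exact this
  calc g i xbar ≤ max (g i xbar) 0 := le_max_left _ _
    _ = 0 := hmax
end
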